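/- Let m be Lebesgue measure on [0,1]. Then for every Borel set A ⊆ [0,1], (Vm)(A) = ∫_A (2q·x + 2p·(1−x)) dx; that is, Vm is the measure with density x ↦ 2q·x + 2p·(1−x) with respect to Lebesgue measure on [0,1]. -/

import Mathlib

open MeasureTheory Set Filter Topology ENNReal

/-- The unit interval `[0,1]` as a measurable space (with the Borel σ-algebra). -/
abbrev UnitInt : Type := ↥(Set.Icc (0:ℝ) 1)

/-- The family of measures `P(x,y,·)`: `p·δ_x + q·δ_y` if `x < y`, `δ_x` if `x = y`,
and `p·δ_y + q·δ_x` if `x > y`. -/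
noncomputable def Pker (p q : ℝ) (x y : UnitInt) : Measure UnitInt :=
  if x < y then ENNReal.ofReal p • Measure.dirac x + ENNReal.ofReal q • Measure.dirac y
  else if y < x then ENNReal.ofReal p • Measure.dirac y + ENNReal.ofReal q • Measure.dirac x
  else Measure.dirac x

private lemma indicator_image_coe (A : Set UnitInt) (z : UnitInt) :
    A.indicator (1 : UnitInt → ℝ≥0∞) z = (Subtype.val '' A).indicator 1 (z : ℝ) := by
  by_cases hz : z ∈ A
  · rw [indicator_of_mem hz, indicator_of_mem (mem_image_of_mem _ hz)]
    rfl
  · rw [indicator_of_notMem hz, indicator_of_notMem]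
    rintro ⟨w, hw, hwz⟩
    rw [Subtype.coe_injective hwz] at hw
    exact hz hw

private lemma Pker_apply_eq (p q : ℝ) (hp : 0 ≤ p) (hq : 0 ≤ q) (hpq : p + q = 1)
    (x y : UnitInt) {A : Set UnitInt} (hA : MeasurableSet A) :
    Pker p q x y A = ENNReal.ofReal p * A.indicator 1 (min x y)
      + ENNReal.ofReal q * A.indicator 1 (max x y) := by
  rcases lt_trichotomy x y with h | h | h
  · rw [Pker, if_pos h]
    simp [Measure.dirac_apply' _ hA, min_eq_left h.le, max_eq_right h.le]
  · subst h
    rw [Pker, if_neg (lt_irrefl x), if_neg (lt_irrefl x), Measure.dirac_apply' _ hA,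
      min_self, max_self, ← add_mul, ← ENNReal.ofReal_add hp hq, hpq, ENNReal.ofReal_one,
      one_mul]
  · rw [Pker, if_neg (asymm h), if_pos h]
    simp [Measure.dirac_apply' _ hA, min_eq_right h.le, max_eq_left h.le]

/-- Helper: double set-integral of `S.indicator 1 (a,b) * B.indicator 1 a`. -/
private lemma lint_ind_left (B : Set ℝ) (hB : MeasurableSet B) (hBI : B ⊆ Icc (0:ℝ) 1)
    (S : Set (ℝ × ℝ)) (hS : MeasurableSet S) (g : ℝ → ℝ≥0∞)
    (hg : ∀ a ∈ B, volume ({b : ℝ | (a, b) ∈ S} ∩ Icc (0:ℝ) 1) = g a) :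
    ∫⁻ a in Icc (0:ℝ) 1, ∫⁻ b in Icc (0:ℝ) 1,
        S.indicator (1 : ℝ × ℝ → ℝ≥0∞) (a, b) * B.indicator (1 : ℝ → ℝ≥0∞) a ∂volume ∂volume
      = ∫⁻ a in B, g a := by
  have key : ∀ a : ℝ, ∫⁻ b in Icc (0:ℝ) 1,
        S.indicator (1 : ℝ × ℝ → ℝ≥0∞) (a, b) * B.indicator (1 : ℝ → ℝ≥0∞) a ∂volume
      = B.indicator (fun a => volume ({b : ℝ | (a, b) ∈ S} ∩ Icc (0:ℝ) 1)) a := by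
    intro a
    by_cases ha : a ∈ B
    · have hsl : MeasurableSet {b : ℝ | (a, b) ∈ S} := hS.preimage measurable_prodMk_left
      have hpt : ∀ b : ℝ, S.indicator (1 : ℝ × ℝ → ℝ≥0∞) (a, b)
          = ({b : ℝ | (a, b) ∈ S}).indicator (1 : ℝ → ℝ≥0∞) b := by
        intro b
        by_cases h : (a, b) ∈ S <;> simp [h, Set.indicator_apply]
      simp only [indicator_of_mem ha, Pi.one_apply, mul_one]
      simp_rw [hpt]
      rw [lintegral_indicator_one hsl, Measure.restrict_apply hsl]
    · simp [indicator_of_notMem ha]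
  rw [lintegral_congr key, lintegral_indicator hB, Measure.restrict_restrict hB,
    inter_eq_left.2 hBI]
  exact setLIntegral_congr_fun hB (fun a ha => hg a ha)

/-- Helper: double set-integral of `S.indicator 1 (a,b) * B.indicator 1 b` (swapped roles). -/
private lemma lint_ind_right (B : Set ℝ) (hB : MeasurableSet B) (hBI : B ⊆ Icc (0:ℝ) 1)
    (S : Set (ℝ × ℝ)) (hS : MeasurableSet S) (g : ℝ → ℝ≥0∞)
    (hg : ∀ b ∈ B, volume ({a : ℝ | (a, b) ∈ S} ∩ Icc (0:ℝ) 1) = g b) :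
    ∫⁻ a in Icc (0:ℝ) 1, ∫⁻ b in Icc (0:ℝ) 1,
        S.indicator (1 : ℝ × ℝ → ℝ≥0∞) (a, b) * B.indicator (1 : ℝ → ℝ≥0∞) b ∂volume ∂volume
      = ∫⁻ b in B, g b := by
  have hmeas : AEMeasurable
      (Function.uncurry fun a b : ℝ =>
        S.indicator (1 : ℝ × ℝ → ℝ≥0∞) (a, b) * B.indicator (1 : ℝ → ℝ≥0∞) b)
      ((volume.restrict (Icc (0:ℝ) 1)).prod (volume.restrict (Icc (0:ℝ) 1))) := by
    have : Measurable fun z : ℝ × ℝ =>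
        S.indicator (1 : ℝ × ℝ → ℝ≥0∞) z * B.indicator (1 : ℝ → ℝ≥0∞) z.2 :=
      (measurable_const.indicator hS).mul ((measurable_const.indicator hB).comp measurable_snd)
    exact this.aemeasurable
  rw [lintegral_lintegral_swap hmeas]
  have hpt : ∀ b a : ℝ, S.indicator (1 : ℝ × ℝ → ℝ≥0∞) (a, b)
      = (Prod.swap ⁻¹' S).indicator (1 : ℝ × ℝ → ℝ≥0∞) (b, a) := by
    intro b a
    by_cases h : (a, b) ∈ S <;> simp [h, Set.indicator_apply, Prod.swap]
  simp_rw [hpt]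
  exact lint_ind_left B hB hBI (Prod.swap ⁻¹' S) (hS.preimage measurable_swap) g hg

private lemma lint_max (B : Set ℝ) (hB : MeasurableSet B) (hBI : B ⊆ Icc (0:ℝ) 1) :
    ∫⁻ a in Icc (0:ℝ) 1, ∫⁻ b in Icc (0:ℝ) 1,
        B.indicator (1 : ℝ → ℝ≥0∞) (max a b) ∂volume ∂volume
      = 2 * ∫⁻ t in B, ENNReal.ofReal t := by
  have hS1 : MeasurableSet {z : ℝ × ℝ | z.2 ≤ z.1} :=
    measurableSet_le measurable_snd measurable_fst
  have hS2 : MeasurableSet {z : ℝ × ℝ | z.1 < z.2} :=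
    measurableSet_lt measurable_fst measurable_snd
  have hpt : ∀ a b : ℝ, B.indicator (1 : ℝ → ℝ≥0∞) (max a b)
      = {z : ℝ × ℝ | z.2 ≤ z.1}.indicator (1 : ℝ × ℝ → ℝ≥0∞) (a, b)
          * B.indicator (1 : ℝ → ℝ≥0∞) a
        + {z : ℝ × ℝ | z.1 < z.2}.indicator (1 : ℝ × ℝ → ℝ≥0∞) (a, b)
          * B.indicator (1 : ℝ → ℝ≥0∞) b := by
    intro a b
    rcases le_or_gt b a with h | h
    · rw [max_eq_left h]
      simp [Set.indicator_apply, h, not_lt.2 h]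
    · rw [max_eq_right h.le]
      simp [Set.indicator_apply, h, not_le.2 h]
  have hadd1 : ∀ a : ℝ, Measurable fun b : ℝ =>
      {z : ℝ × ℝ | z.2 ≤ z.1}.indicator (1 : ℝ × ℝ → ℝ≥0∞) (a, b)
        * B.indicator (1 : ℝ → ℝ≥0∞) a := fun a => by
    exact ((measurable_const.indicator hS1).comp measurable_prodMk_left).mul measurable_const
  have step : ∀ a : ℝ, ∫⁻ b in Icc (0:ℝ) 1, B.indicator (1 : ℝ → ℝ≥0∞) (max a b) ∂volume
      = (∫⁻ b in Icc (0:ℝ) 1, {z : ℝ × ℝ | z.2 ≤ z.1}.indicator (1 : ℝ × ℝ → ℝ≥0∞) (a, b)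
            * B.indicator (1 : ℝ → ℝ≥0∞) a ∂volume)
        + ∫⁻ b in Icc (0:ℝ) 1, {z : ℝ × ℝ | z.1 < z.2}.indicator (1 : ℝ × ℝ → ℝ≥0∞) (a, b)
            * B.indicator (1 : ℝ → ℝ≥0∞) b ∂volume := by
    intro a
    calc ∫⁻ b in Icc (0:ℝ) 1, B.indicator (1 : ℝ → ℝ≥0∞) (max a b) ∂volume
        = ∫⁻ b in Icc (0:ℝ) 1,
            ({z : ℝ × ℝ | z.2 ≤ z.1}.indicator (1 : ℝ × ℝ → ℝ≥0∞) (a, b)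
              * B.indicator (1 : ℝ → ℝ≥0∞) a
            + {z : ℝ × ℝ | z.1 < z.2}.indicator (1 : ℝ × ℝ → ℝ≥0∞) (a, b)
              * B.indicator (1 : ℝ → ℝ≥0∞) b) ∂volume := lintegral_congr fun b => hpt a b
      _ = _ := lintegral_add_left (hadd1 a) _
  have hF : Measurable fun a : ℝ =>
      ∫⁻ b in Icc (0:ℝ) 1, {z : ℝ × ℝ | z.2 ≤ z.1}.indicator (1 : ℝ × ℝ → ℝ≥0∞) (a, b)
        * B.indicator (1 : ℝ → ℝ≥0∞) a ∂volume := by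
    exact (((measurable_const.indicator hS1)).mul
      ((measurable_const.indicator hB).comp measurable_fst)).lintegral_prod_right'
  rw [lintegral_congr step, lintegral_add_left hF]
  rw [lint_ind_left B hB hBI _ hS1 (fun a => ENNReal.ofReal a) (by
    intro a ha
    obtain ⟨h0, h1⟩ := hBI ha
    have hset : {b : ℝ | (a, b) ∈ {z : ℝ × ℝ | z.2 ≤ z.1}} ∩ Icc (0:ℝ) 1 = Icc 0 a := by
      ext x
      simp only [mem_inter_iff, mem_setOf_eq, mem_Icc]
      constructor
      · rintro ⟨hxa, hx0, _⟩; exact ⟨hx0, hxa⟩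
      · rintro ⟨hx0, hxa⟩; exact ⟨hxa, hx0, hxa.trans h1⟩
    rw [hset, Real.volume_Icc, sub_zero])]
  rw [lint_ind_right B hB hBI _ hS2 (fun b => ENNReal.ofReal b) (by
    intro b hb
    obtain ⟨h0, h1⟩ := hBI hb
    have hset : {a : ℝ | (a, b) ∈ {z : ℝ × ℝ | z.1 < z.2}} ∩ Icc (0:ℝ) 1 = Ico 0 b := by
      ext x
      simp only [mem_inter_iff, mem_setOf_eq, mem_Icc, mem_Ico]
      constructor
      · rintro ⟨hxb, hx0, _⟩; exact ⟨hx0, hxb⟩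
      · rintro ⟨hx0, hxb⟩; exact ⟨hxb, hx0, hxb.le.trans h1⟩
    rw [hset, Real.volume_Ico, sub_zero])]
  rw [two_mul]

private lemma lint_min (B : Set ℝ) (hB : MeasurableSet B) (hBI : B ⊆ Icc (0:ℝ) 1) :
    ∫⁻ a in Icc (0:ℝ) 1, ∫⁻ b in Icc (0:ℝ) 1,
        B.indicator (1 : ℝ → ℝ≥0∞) (min a b) ∂volume ∂volume
      = 2 * ∫⁻ t in B, ENNReal.ofReal (1 - t) := by
  have hS1 : MeasurableSet {z : ℝ × ℝ | z.2 ≤ z.1} :=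
    measurableSet_le measurable_snd measurable_fst
  have hS2 : MeasurableSet {z : ℝ × ℝ | z.1 < z.2} :=
    measurableSet_lt measurable_fst measurable_snd
  have hpt : ∀ a b : ℝ, B.indicator (1 : ℝ → ℝ≥0∞) (min a b)
      = {z : ℝ × ℝ | z.1 < z.2}.indicator (1 : ℝ × ℝ → ℝ≥0∞) (a, b)
          * B.indicator (1 : ℝ → ℝ≥0∞) a
        + {z : ℝ × ℝ | z.2 ≤ z.1}.indicator (1 : ℝ × ℝ → ℝ≥0∞) (a, b)
          * B.indicator (1 : ℝ → ℝ≥0∞) b := by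
    intro a b
    rcases le_or_gt b a with h | h
    · rw [min_eq_right h]
      simp [Set.indicator_apply, h, not_lt.2 h]
    · rw [min_eq_left h.le]
      simp [Set.indicator_apply, h, not_le.2 h]
  have hadd1 : ∀ a : ℝ, Measurable fun b : ℝ =>
      {z : ℝ × ℝ | z.1 < z.2}.indicator (1 : ℝ × ℝ → ℝ≥0∞) (a, b)
        * B.indicator (1 : ℝ → ℝ≥0∞) a := fun a => by
    exact ((measurable_const.indicator hS2).comp measurable_prodMk_left).mul measurable_const
  have step : ∀ a : ℝ, ∫⁻ b in Icc (0:ℝ) 1, B.indicator (1 : ℝ → ℝ≥0∞) (min a b) ∂volume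
      = (∫⁻ b in Icc (0:ℝ) 1, {z : ℝ × ℝ | z.1 < z.2}.indicator (1 : ℝ × ℝ → ℝ≥0∞) (a, b)
            * B.indicator (1 : ℝ → ℝ≥0∞) a ∂volume)
        + ∫⁻ b in Icc (0:ℝ) 1, {z : ℝ × ℝ | z.2 ≤ z.1}.indicator (1 : ℝ × ℝ → ℝ≥0∞) (a, b)
            * B.indicator (1 : ℝ → ℝ≥0∞) b ∂volume := by
    intro a
    calc ∫⁻ b in Icc (0:ℝ) 1, B.indicator (1 : ℝ → ℝ≥0∞) (min a b) ∂volume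
        = ∫⁻ b in Icc (0:ℝ) 1,
            ({z : ℝ × ℝ | z.1 < z.2}.indicator (1 : ℝ × ℝ → ℝ≥0∞) (a, b)
              * B.indicator (1 : ℝ → ℝ≥0∞) a
            + {z : ℝ × ℝ | z.2 ≤ z.1}.indicator (1 : ℝ × ℝ → ℝ≥0∞) (a, b)
              * B.indicator (1 : ℝ → ℝ≥0∞) b) ∂volume := lintegral_congr fun b => hpt a b
      _ = _ := lintegral_add_left (hadd1 a) _
  have hF : Measurable fun a : ℝ =>
      ∫⁻ b in Icc (0:ℝ) 1, {z : ℝ × ℝ | z.1 < z.2}.indicator (1 : ℝ × ℝ → ℝ≥0∞) (a, b)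
        * B.indicator (1 : ℝ → ℝ≥0∞) a ∂volume := by
    exact (((measurable_const.indicator hS2)).mul
      ((measurable_const.indicator hB).comp measurable_fst)).lintegral_prod_right'
  rw [lintegral_congr step, lintegral_add_left hF]
  rw [lint_ind_left B hB hBI _ hS2 (fun a => ENNReal.ofReal (1 - a)) (by
    intro a ha
    obtain ⟨h0, h1⟩ := hBI ha
    have hset : {b : ℝ | (a, b) ∈ {z : ℝ × ℝ | z.1 < z.2}} ∩ Icc (0:ℝ) 1 = Ioc a 1 := by
      ext x
      simp only [mem_inter_iff, mem_setOf_eq, mem_Icc, mem_Ioc]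
      constructor
      · rintro ⟨hxa, _, hx1⟩; exact ⟨hxa, hx1⟩
      · rintro ⟨hxa, hx1⟩; exact ⟨hxa, h0.trans hxa.le, hx1⟩
    rw [hset, Real.volume_Ioc])]
  rw [lint_ind_right B hB hBI _ hS1 (fun b => ENNReal.ofReal (1 - b)) (by
    intro b hb
    obtain ⟨h0, h1⟩ := hBI hb
    have hset : {a : ℝ | (a, b) ∈ {z : ℝ × ℝ | z.2 ≤ z.1}} ∩ Icc (0:ℝ) 1 = Icc b 1 := by
      ext x
      simp only [mem_inter_iff, mem_setOf_eq, mem_Icc]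
      constructor
      · rintro ⟨hxb, _, hx1⟩; exact ⟨hxb, hx1⟩
      · rintro ⟨hxb, hx1⟩; exact ⟨hxb, h0.trans hxb, hx1⟩
    rw [hset, Real.volume_Icc])]
  rw [two_mul]

/-- for Lebesgue measure m on [0,1], Vm has density x ↦ 2q·x + 2p·(1−x)
with respect to m: (Vm)(A) = ∫_A (2q·x + 2p·(1−x)) dx for every Borel set A. -/
theorem V_lebesgue_density (p q : ℝ) (hp : 0 ≤ p) (hq : 0 ≤ q) (hpq : p + q = 1)
    (V : Measure UnitInt → Measure UnitInt)
    (hV : ∀ (μ : Measure UnitInt) (A : Set UnitInt), MeasurableSet A →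
      V μ A = ∫⁻ x, ∫⁻ y, Pker p q x y A ∂μ ∂μ) :
    ∀ A : Set UnitInt, MeasurableSet A →
      V (volume : Measure UnitInt) A
        = ∫⁻ x in A, ENNReal.ofReal (2*q*(x:ℝ) + 2*p*(1 - (x:ℝ))) ∂(volume : Measure UnitInt) := by
  intro A hA
  have hI : MeasurableSet (Icc (0:ℝ) 1) := measurableSet_Icc
  set B : Set ℝ := Subtype.val '' A with hBdef
  have hBm : MeasurableSet B :=
    ((MeasurableEmbedding.subtype_coe hI).measurableSet_image).2 hA
  have hBI : B ⊆ Icc (0:ℝ) 1 := Subtype.coe_image_subset _ _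
  have hker : ∀ x y : UnitInt, Pker p q x y A
      = ENNReal.ofReal p * B.indicator (1 : ℝ → ℝ≥0∞) (min (x:ℝ) (y:ℝ))
        + ENNReal.ofReal q * B.indicator (1 : ℝ → ℝ≥0∞) (max (x:ℝ) (y:ℝ)) := by
    intro x y
    rw [Pker_apply_eq p q hp hq hpq x y hA, indicator_image_coe, indicator_image_coe]
    rfl
  rw [hV volume A hA]
  simp_rw [hker]
  have hvol : (volume : Measure UnitInt) = (volume : Measure ℝ).comap Subtype.val := rfl
  rw [hvol]
  have step1 : ∫⁻ x : UnitInt, ∫⁻ y : UnitInt,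
      (ENNReal.ofReal p * B.indicator (1 : ℝ → ℝ≥0∞) (min (x:ℝ) (y:ℝ))
        + ENNReal.ofReal q * B.indicator (1 : ℝ → ℝ≥0∞) (max (x:ℝ) (y:ℝ)))
      ∂((volume : Measure ℝ).comap Subtype.val) ∂((volume : Measure ℝ).comap Subtype.val)
      = ∫⁻ a in Icc (0:ℝ) 1, ∫⁻ b in Icc (0:ℝ) 1,
          (ENNReal.ofReal p * B.indicator (1 : ℝ → ℝ≥0∞) (min a b)
            + ENNReal.ofReal q * B.indicator (1 : ℝ → ℝ≥0∞) (max a b)) ∂volume ∂volume := by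
    rw [← lintegral_subtype_comap hI (fun a => ∫⁻ b in Icc (0:ℝ) 1,
      (ENNReal.ofReal p * B.indicator (1 : ℝ → ℝ≥0∞) (min a b)
        + ENNReal.ofReal q * B.indicator (1 : ℝ → ℝ≥0∞) (max a b)) ∂volume)]
    refine lintegral_congr fun x => ?_
    exact lintegral_subtype_comap hI (fun b =>
      ENNReal.ofReal p * B.indicator (1 : ℝ → ℝ≥0∞) (min (x:ℝ) b)
        + ENNReal.ofReal q * B.indicator (1 : ℝ → ℝ≥0∞) (max (x:ℝ) b))
  rw [step1]
  have hadd1 : ∀ a : ℝ, Measurable fun b : ℝ =>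
      ENNReal.ofReal p * B.indicator (1 : ℝ → ℝ≥0∞) (min a b) := fun a => by
    exact ((measurable_const.indicator hBm).comp (measurable_const.min measurable_id)).const_mul _
  have step2 : ∀ a : ℝ, ∫⁻ b in Icc (0:ℝ) 1,
      (ENNReal.ofReal p * B.indicator (1 : ℝ → ℝ≥0∞) (min a b)
        + ENNReal.ofReal q * B.indicator (1 : ℝ → ℝ≥0∞) (max a b)) ∂volume
      = ENNReal.ofReal p * ∫⁻ b in Icc (0:ℝ) 1, B.indicator (1 : ℝ → ℝ≥0∞) (min a b) ∂volume
        + ENNReal.ofReal q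
          * ∫⁻ b in Icc (0:ℝ) 1, B.indicator (1 : ℝ → ℝ≥0∞) (max a b) ∂volume := by
    intro a
    rw [lintegral_add_left (hadd1 a),
      lintegral_const_mul' _ _ ENNReal.ofReal_ne_top,
      lintegral_const_mul' _ _ ENNReal.ofReal_ne_top]
  rw [lintegral_congr step2]
  have hG : Measurable fun a : ℝ =>
      ENNReal.ofReal p * ∫⁻ b in Icc (0:ℝ) 1, B.indicator (1 : ℝ → ℝ≥0∞) (min a b) ∂volume := by
    exact (((measurable_const.indicator hBm).comp
      (measurable_fst.min measurable_snd)).lintegral_prod_right').const_mul _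
  rw [lintegral_add_left hG,
    lintegral_const_mul' _ _ ENNReal.ofReal_ne_top,
    lintegral_const_mul' _ _ ENNReal.ofReal_ne_top,
    lint_min B hBm hBI, lint_max B hBm hBI]
  -- right-hand side
  rw [setLIntegral_subtype hI A (fun t => ENNReal.ofReal (2*q*t + 2*p*(1 - t)))]
  have hsplit : ∫⁻ t in Subtype.val '' A, ENNReal.ofReal (2*q*t + 2*p*(1 - t)) ∂volume
      = ∫⁻ t in B, (ENNReal.ofReal (2*q) * ENNReal.ofReal t
          + ENNReal.ofReal (2*p) * ENNReal.ofReal (1 - t)) ∂volume := by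
    refine setLIntegral_congr_fun hBm (fun t ht => ?_)
    obtain ⟨h0, h1⟩ := hBI ht
    rw [ENNReal.ofReal_add (by positivity) (by nlinarith),
      ENNReal.ofReal_mul (by positivity : (0:ℝ) ≤ 2*q),
      ENNReal.ofReal_mul (by positivity : (0:ℝ) ≤ 2*p)]
  rw [hsplit]
  have hmq : Measurable fun t : ℝ => ENNReal.ofReal (2*q) * ENNReal.ofReal t := by
    exact (measurable_id.ennreal_ofReal).const_mul _
  rw [lintegral_add_left hmq,
    lintegral_const_mul' _ _ ENNReal.ofReal_ne_top,
    lintegral_const_mul' _ _ ENNReal.ofReal_ne_top,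
    ENNReal.ofReal_mul (by norm_num : (0:ℝ) ≤ 2),
    ENNReal.ofReal_mul (by norm_num : (0:ℝ) ≤ 2),
    ENNReal.ofReal_ofNat]
  ring
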